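/- Let d ≥ 2 be an integer and let q ≥ 2, c, m be real numbers with c ≥ m ≥ 1. Define T = {(a,b) ∈ ℝ_{≥0}^{d−1} × ℝ_{≥0} : |a| + b ≥ m, |a| < 1, and b < c − |a|/(q−1)}, where |a| = a_1+⋯+a_{d−1}. Then the Lebesgue measure of T equals (c − m)/(d−1)! + (d−1)·(1 − 1/(q−1))/d!. -/

import Mathlib

open MeasureTheory Set


lemma poly_int (n : ℕ) (α t r : ℝ) :
    (∫ u in (0:ℝ)..r,
      ((α + u * t) * (r - u) ^ n / (Nat.factorial n : ℝ)
        + t * (r - u) ^ (n + 1) * n / (Nat.factorial (n + 1) : ℝ)))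
    = α * r ^ (n + 1) / (Nat.factorial (n + 1) : ℝ)
        + t * r ^ (n + 2) * (n + 1) / (Nat.factorial (n + 2) : ℝ) := by
  have hn : (Nat.factorial n : ℝ) ≠ 0 := by positivity
  have hn1 : (Nat.factorial (n + 1) : ℝ) ≠ 0 := by positivity
  have hf1 : (Nat.factorial (n + 1) : ℝ) = ((n : ℝ) + 1) * (Nat.factorial n : ℝ) := by
    rw [Nat.factorial_succ]; push_cast; ring
  have hf2 : (Nat.factorial (n + 2) : ℝ) = ((n : ℝ) + 2) * (Nat.factorial (n + 1) : ℝ) := by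
    rw [show n + 2 = (n+1) + 1 from rfl, Nat.factorial_succ (n+1)]; push_cast; ring
  have h1 : (∫ u in (0:ℝ)..r,
      ((α + u * t) * (r - u) ^ n / (Nat.factorial n : ℝ)
        + t * (r - u) ^ (n + 1) * n / (Nat.factorial (n + 1) : ℝ)))
      = ∫ v in (0:ℝ)..r,
      (((α + r * t) / (Nat.factorial n : ℝ)) * v ^ n
        + (-t / (Nat.factorial (n + 1) : ℝ)) * v ^ (n + 1)) := by
    have := intervalIntegral.integral_comp_sub_left (a := (0:ℝ)) (b := r)
      (fun v => ((α + r * t) / (Nat.factorial n : ℝ)) * v ^ n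
        + (-t / (Nat.factorial (n + 1) : ℝ)) * v ^ (n + 1)) r
    simp only [sub_zero, sub_self] at this
    rw [← this]
    apply intervalIntegral.integral_congr
    intro u _
    rw [hf1]
    field_simp
    ring
  rw [h1, intervalIntegral.integral_add
      (f := fun v => ((α + r * t) / (Nat.factorial n : ℝ)) * v ^ n)
      (g := fun v => (-t / (Nat.factorial (n + 1) : ℝ)) * v ^ (n + 1))
      (((continuous_const.mul (continuous_pow n)).intervalIntegrable _ _))
      (((continuous_const.mul (continuous_pow (n+1))).intervalIntegrable _ _)),
    intervalIntegral.integral_const_mul, intervalIntegral.integral_const_mul,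
    integral_pow, integral_pow]
  rw [hf2, hf1]
  field_simp
  push_cast
  ring

lemma simplex_lintegral (n : ℕ) :
    ∀ t α r : ℝ, 0 ≤ t → 0 ≤ α → 0 < r →
    (∫⁻ a : Fin n → ℝ, Set.indicator {a : Fin n → ℝ | (∀ i, 0 ≤ a i) ∧ ∑ i, a i < r}
      (fun a => ENNReal.ofReal (α + (∑ i, a i) * t)) a)
    = ENNReal.ofReal (α * r ^ n / (Nat.factorial n : ℝ)
        + t * r ^ (n + 1) * (n : ℝ) / (Nat.factorial (n + 1) : ℝ)) := by
  induction n with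
  | zero =>
    intro t α r ht hα hr
    rw [lintegral_unique]
    have h1 : (volume : Measure (Fin 0 → ℝ)) Set.univ = 1 := by
      rw [MeasureTheory.volume_pi, MeasureTheory.Measure.pi_univ]; simp
    rw [h1, mul_one]
    rw [Set.indicator_of_mem (by simp [hr])]
    simp
  | succ n ih =>
    intro t α r ht hα hr
    set S : Set (ℝ × (Fin n → ℝ)) :=
      {p : ℝ × (Fin n → ℝ) | (0 ≤ p.1 ∧ ∀ i, 0 ≤ p.2 i) ∧ p.1 + ∑ i, p.2 i < r} with hS
    have hSm : MeasurableSet S := by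
      have h1 : MeasurableSet {p : ℝ × (Fin n → ℝ) | 0 ≤ p.1} :=
        measurableSet_le measurable_const measurable_fst
      have h2 : MeasurableSet {p : ℝ × (Fin n → ℝ) | ∀ i, 0 ≤ p.2 i} := by
        rw [show {p : ℝ × (Fin n → ℝ) | ∀ i, 0 ≤ p.2 i} = ⋂ i, {p | 0 ≤ p.2 i} from by
          ext p; simp]
        exact MeasurableSet.iInter fun i => measurableSet_le measurable_const
          measurable_snd.eval
      have h3 : MeasurableSet {p : ℝ × (Fin n → ℝ) | p.1 + ∑ i, p.2 i < r} :=
        measurableSet_lt (measurable_fst.add (Finset.measurable_sum _ fun i _ =>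
          (measurable_pi_apply i).comp measurable_snd)) measurable_const
      exact (h1.inter h2).inter h3
    set G : ℝ × (Fin n → ℝ) → ENNReal := fun p =>
      Set.indicator S (fun p => ENNReal.ofReal (α + (p.1 + ∑ i, p.2 i) * t)) p with hG
    have hGm : Measurable G := by
      apply Measurable.indicator _ hSm
      exact ENNReal.measurable_ofReal.comp
        ((measurable_const.add ((measurable_fst.add (Finset.measurable_sum _ fun i _ =>
          (measurable_pi_apply i).comp measurable_snd)).mul measurable_const)))
    have hcomp : ∀ a : Fin (n+1) → ℝ,
        Set.indicator {a : Fin (n+1) → ℝ | (∀ i, 0 ≤ a i) ∧ ∑ i, a i < r}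
          (fun a => ENNReal.ofReal (α + (∑ i, a i) * t)) a
        = G ((MeasurableEquiv.piFinSuccAbove (fun _ : Fin (n+1) => ℝ) 0) a) := by
      intro a
      have he : (MeasurableEquiv.piFinSuccAbove (fun _ : Fin (n+1) => ℝ) 0) a
          = (a 0, fun i => a i.succ) := by
        ext : 1
        · rfl
        · funext i
          show a ((0 : Fin (n+1)).succAbove i) = a i.succ
          rw [Fin.zero_succAbove]
      rw [he]
      simp only [hG, hS, Set.indicator_apply, Set.mem_setOf_eq, Fin.sum_univ_succ,
        Fin.forall_fin_succ]
    calc (∫⁻ a : Fin (n+1) → ℝ, Set.indicator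
            {a : Fin (n+1) → ℝ | (∀ i, 0 ≤ a i) ∧ ∑ i, a i < r}
            (fun a => ENNReal.ofReal (α + (∑ i, a i) * t)) a)
        = ∫⁻ a : Fin (n+1) → ℝ,
            G ((MeasurableEquiv.piFinSuccAbove (fun _ : Fin (n+1) => ℝ) 0) a) := by
          simp_rw [hcomp]
      _ = ∫⁻ p : ℝ × (Fin n → ℝ), G p := by
          exact (volume_preserving_piFinSuccAbove (fun _ : Fin (n+1) => ℝ) 0).lintegral_comp hGm
      _ = ∫⁻ u : ℝ, ∫⁻ y : Fin n → ℝ, G (u, y) := by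
          rw [MeasureTheory.Measure.volume_eq_prod, lintegral_prod _ hGm.aemeasurable]
      _ = ∫⁻ u : ℝ, Set.indicator (Set.Ico (0:ℝ) r)
            (fun u => ENNReal.ofReal ((α + u * t) * (r - u) ^ n / (Nat.factorial n : ℝ)
              + t * (r - u) ^ (n + 1) * (n : ℝ) / (Nat.factorial (n + 1) : ℝ))) u := by
          apply lintegral_congr
          intro u
          by_cases hu : u ∈ Set.Ico (0:ℝ) r
          · have hrw : ∀ y : Fin n → ℝ, G (u, y)
                = Set.indicator {y : Fin n → ℝ | (∀ i, 0 ≤ y i) ∧ ∑ i, y i < r - u}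
                  (fun y => ENNReal.ofReal ((α + u * t) + (∑ i, y i) * t)) y := by
              intro y
              simp only [hG, hS, Set.indicator_apply, Set.mem_setOf_eq]
              have hiff : ((0 ≤ u ∧ ∀ i, 0 ≤ y i) ∧ u + ∑ i, y i < r)
                  ↔ ((∀ i, 0 ≤ y i) ∧ ∑ i, y i < r - u) := by
                constructor
                · rintro ⟨⟨_, h2⟩, h3⟩; exact ⟨h2, by linarith⟩
                · rintro ⟨h2, h3⟩; exact ⟨⟨hu.1, h2⟩, by linarith⟩
              have hval : α + (u + ∑ i, y i) * t = (α + u * t) + (∑ i, y i) * t := by ring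
              rw [hval, if_congr hiff rfl rfl]
            simp_rw [hrw]
            rw [ih t (α + u * t) (r - u) ht
              (add_nonneg hα (mul_nonneg hu.1 ht)) (by linarith [hu.2]),
              Set.indicator_of_mem hu]
          · have hz : ∀ y : Fin n → ℝ, G (u, y) = 0 := by
              intro y
              apply Set.indicator_of_notMem
              simp only [Set.mem_Ico, not_and, not_lt] at hu
              rintro ⟨⟨hu0, hy⟩, hlt⟩
              have h1 : 0 ≤ ∑ i, y i := Finset.sum_nonneg fun i _ => hy i
              have h2 := hu hu0
              linarith
            simp_rw [hz]
            rw [lintegral_zero, Set.indicator_of_notMem hu]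
      _ = ENNReal.ofReal (α * r ^ (n+1) / (Nat.factorial (n+1) : ℝ)
            + t * r ^ ((n+1) + 1) * ((n:ℝ)+1) / (Nat.factorial ((n+1) + 1) : ℝ)) := by
          rw [lintegral_indicator measurableSet_Ico]
          have hcont : Continuous (fun u : ℝ =>
              (α + u * t) * (r - u) ^ n / (Nat.factorial n : ℝ)
              + t * (r - u) ^ (n + 1) * (n : ℝ) / (Nat.factorial (n + 1) : ℝ)) := by
            fun_prop
          have hint : IntegrableOn (fun u : ℝ =>
              (α + u * t) * (r - u) ^ n / (Nat.factorial n : ℝ)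
              + t * (r - u) ^ (n + 1) * (n : ℝ) / (Nat.factorial (n + 1) : ℝ))
              (Set.Ico 0 r) := by
            exact (hcont.integrableOn_Icc).mono_set Set.Ico_subset_Icc_self
          have hnn : ∀ u ∈ Set.Ico (0:ℝ) r,
              0 ≤ (α + u * t) * (r - u) ^ n / (Nat.factorial n : ℝ)
              + t * (r - u) ^ (n + 1) * (n : ℝ) / (Nat.factorial (n + 1) : ℝ) := by
            intro u hu
            have h1 : 0 ≤ α + u * t := add_nonneg hα (mul_nonneg hu.1 ht)
            have h2 : 0 ≤ r - u := by linarith [hu.2]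
            apply add_nonneg
            · exact div_nonneg (mul_nonneg h1 (pow_nonneg h2 n)) (Nat.cast_nonneg _)
            · exact div_nonneg (mul_nonneg (mul_nonneg ht (pow_nonneg h2 (n+1)))
                (Nat.cast_nonneg n)) (Nat.cast_nonneg _)
          rw [← MeasureTheory.ofReal_integral_eq_lintegral_ofReal hint
            ((ae_restrict_iff' measurableSet_Ico).mpr (Filter.Eventually.of_forall hnn))]
          congr 1
          rw [MeasureTheory.integral_Ico_eq_integral_Ioo,
            ← MeasureTheory.integral_Ioc_eq_integral_Ioo,
            ← intervalIntegral.integral_of_le hr.le]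
          rw [poly_int n α t r]
      _ = ENNReal.ofReal (α * r ^ (n+1) / (Nat.factorial (n+1) : ℝ)
            + t * r ^ ((n+1) + 1) * ((n+1 : ℕ) : ℝ) / (Nat.factorial ((n+1) + 1) : ℝ)) := by
          push_cast
          ring_nf

/-- For `d ≥ 2` and reals `q ≥ 2`, `c ≥ m ≥ 1`, the Lebesgue measure of
`T = {(a,b) ∈ ℝ_{≥0}^{d-1} × ℝ_{≥0} : |a| + b ≥ m, |a| < 1, b < c - |a|/(q-1)}` equals
`(c - m)/(d-1)! + (d-1)(1 - 1/(q-1))/d!`, where `|a| = a_1 + ⋯ + a_{d-1}`. -/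
theorem volume_T (d : ℕ) (hd : 2 ≤ d) (q c m : ℝ) (hq : 2 ≤ q) (hm : 1 ≤ m) (hcm : m ≤ c) :
    MeasureTheory.volume
        {x : (Fin (d - 1) → ℝ) × ℝ |
          (∀ i, 0 ≤ x.1 i) ∧ 0 ≤ x.2 ∧
          m ≤ (∑ i, x.1 i) + x.2 ∧
          (∑ i, x.1 i) < 1 ∧
          x.2 < c - (∑ i, x.1 i) / (q - 1)} =
      ENNReal.ofReal ((c - m) / (Nat.factorial (d - 1) : ℝ) +
        ((d : ℝ) - 1) * (1 - 1 / (q - 1)) / (Nat.factorial d : ℝ)) := by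
  set n := d - 1 with hn
  have hq1 : (1:ℝ) ≤ q - 1 := by linarith
  have hq0 : (0:ℝ) < q - 1 := by linarith
  set t : ℝ := 1 - 1 / (q - 1) with htdef
  have ht : 0 ≤ t := by
    have : 1 / (q - 1) ≤ 1 := by
      rw [div_le_one hq0]; linarith
    rw [htdef, sub_nonneg]; exact this
  set T : Set ((Fin n → ℝ) × ℝ) :=
    {x : (Fin n → ℝ) × ℝ |
      (∀ i, 0 ≤ x.1 i) ∧ 0 ≤ x.2 ∧ m ≤ (∑ i, x.1 i) + x.2 ∧
      (∑ i, x.1 i) < 1 ∧ x.2 < c - (∑ i, x.1 i) / (q - 1)} with hT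
  have hTm : MeasurableSet T := by
    have hsum : Measurable fun x : (Fin n → ℝ) × ℝ => ∑ i, x.1 i :=
      Finset.measurable_sum _ fun i _ => measurable_fst.eval
    have h1 : MeasurableSet {x : (Fin n → ℝ) × ℝ | ∀ i, 0 ≤ x.1 i} := by
      rw [show {x : (Fin n → ℝ) × ℝ | ∀ i, 0 ≤ x.1 i} = ⋂ i, {x | 0 ≤ x.1 i} from by
        ext x; simp]
      exact MeasurableSet.iInter fun i => measurableSet_le measurable_const measurable_fst.eval
    have h2 : MeasurableSet {x : (Fin n → ℝ) × ℝ | 0 ≤ x.2} :=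
      measurableSet_le measurable_const measurable_snd
    have h3 : MeasurableSet {x : (Fin n → ℝ) × ℝ | m ≤ (∑ i, x.1 i) + x.2} :=
      measurableSet_le measurable_const (hsum.add measurable_snd)
    have h4 : MeasurableSet {x : (Fin n → ℝ) × ℝ | (∑ i, x.1 i) < 1} :=
      measurableSet_lt hsum measurable_const
    have h5 : MeasurableSet {x : (Fin n → ℝ) × ℝ | x.2 < c - (∑ i, x.1 i) / (q - 1)} :=
      measurableSet_lt measurable_snd (measurable_const.sub (hsum.div measurable_const))
    exact h1.inter (h2.inter (h3.inter (h4.inter h5)))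
  rw [show (volume : Measure ((Fin n → ℝ) × ℝ)) = (volume : Measure (Fin n → ℝ)).prod volume
    from rfl, Measure.prod_apply hTm]
  have hslice : ∀ a : Fin n → ℝ, (volume : Measure ℝ) (Prod.mk a ⁻¹' T)
      = Set.indicator {a : Fin n → ℝ | (∀ i, 0 ≤ a i) ∧ ∑ i, a i < 1}
          (fun a => ENNReal.ofReal ((c - m) + (∑ i, a i) * t)) a := by
    intro a
    by_cases ha : a ∈ {a : Fin n → ℝ | (∀ i, 0 ≤ a i) ∧ ∑ i, a i < 1}
    · have ha1 : ∀ i, 0 ≤ a i := ha.1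
      have ha2 : ∑ i, a i < 1 := ha.2
      have hpre : Prod.mk a ⁻¹' T
          = Set.Ico (m - ∑ i, a i) (c - (∑ i, a i) / (q - 1)) := by
        ext b
        simp only [hT, Set.mem_preimage, Set.mem_setOf_eq, Set.mem_Ico]
        constructor
        · rintro ⟨-, -, h3, -, h5⟩
          exact ⟨by linarith, h5⟩
        · rintro ⟨h1, h2⟩
          refine ⟨ha1, by linarith, by linarith, ha2, h2⟩
      rw [hpre, Real.volume_Ico, Set.indicator_of_mem ha]
      congr 1
      rw [htdef]
      ring
    · have hpre : Prod.mk a ⁻¹' T = ∅ := by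
        ext b
        simp only [hT, Set.mem_preimage, Set.mem_setOf_eq, Set.mem_empty_iff_false, iff_false]
        rintro ⟨h1, -, -, h4, -⟩
        exact ha ⟨h1, h4⟩
      rw [hpre, Set.indicator_of_notMem ha]
      simp
  simp_rw [hslice]
  rw [simplex_lintegral n t (c - m) 1 ht (by linarith) one_pos]
  congr 1
  have hd1 : n + 1 = d := by omega
  have hcast : ((n : ℝ)) = (d : ℝ) - 1 := by
    rw [hn]
    push_cast [Nat.cast_sub (by omega : 1 ≤ d)]
    ring
  rw [hd1, hcast]
  ring
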